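/- Let m, n be coprime integers with M = m^8 - 4m^6n^2 + 10m^4n^4 - 4m^2n^6 + n^8 and N = m^8 - 4m^6n^2 - 6m^4n^4 - 4m^2n^6 + n^8. If m and n are both odd, then gcd(M, N) = 4; if exactly one of m, n is even, then gcd(M, N) = 1. -/

import Mathlib

theorem stmt12 (m n : ℤ) (hco : IsCoprime m n) :
    (Odd m → Odd n →
      Int.gcd (m^8 - 4*m^6*n^2 + 10*m^4*n^4 - 4*m^2*n^6 + n^8)
              (m^8 - 4*m^6*n^2 - 6*m^4*n^4 - 4*m^2*n^6 + n^8) = 4) ∧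
    ((Odd m ∧ Even n) ∨ (Even m ∧ Odd n) →
      Int.gcd (m^8 - 4*m^6*n^2 + 10*m^4*n^4 - 4*m^2*n^6 + n^8)
              (m^8 - 4*m^6*n^2 - 6*m^4*n^4 - 4*m^2*n^6 + n^8) = 1) := by
  set M : ℤ := m^8 - 4*m^6*n^2 + 10*m^4*n^4 - 4*m^2*n^6 + n^8 with hMdef
  set N : ℤ := m^8 - 4*m^6*n^2 - 6*m^4*n^4 - 4*m^2*n^6 + n^8 with hNdef
  set d : ℕ := Int.gcd M N with hddef
  have hdM : (d : ℤ) ∣ M := Int.gcd_dvd_left M N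
  have hdN : (d : ℤ) ∣ N := Int.gcd_dvd_right M N
  have hcmM : IsCoprime m M := by
    have h1 : IsCoprime m (n ^ 8) := hco.pow_right
    have h2 : M = n^8 + m * (m^7 - 4*m^5*n^2 + 10*m^3*n^4 - 4*m*n^6) := by
      rw [hMdef]; ring
    rw [h2]
    exact h1.add_mul_left_right _
  have hcnM : IsCoprime n M := by
    have h1 : IsCoprime n (m ^ 8) := hco.symm.pow_right
    have h2 : M = m^8 + n * (-4*m^6*n + 10*m^4*n^3 - 4*m^2*n^5 + n^7) := by
      rw [hMdef]; ring
    rw [h2]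
    exact h1.add_mul_left_right _
  have hcop : IsCoprime (m^4 * n^4) M :=
    (hcmM.pow_left).mul_left (hcnM.pow_left)
  have hd16 : (d : ℤ) ∣ 16 := by
    have hsub : (d : ℤ) ∣ 16 * (m^4 * n^4) := by
      have : M - N = 16 * (m^4 * n^4) := by rw [hMdef, hNdef]; ring
      exact this ▸ dvd_sub hdM hdN
    have hc : IsCoprime ((d:ℤ)) (m^4 * n^4) :=
      (hcop.of_isCoprime_of_dvd_right hdM).symm
    exact hc.dvd_of_dvd_mul_right hsub
  have hd16n : d ∣ 16 := by exact_mod_cast hd16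
  have hdpos : 0 < d := Nat.pos_of_dvd_of_pos hd16n (by norm_num)
  constructor
  · intro hm hn
    obtain ⟨a, ha⟩ := hm
    obtain ⟨b, hb⟩ := hn
    have h4M : (4 : ℤ) ∣ M := by
      have hz : ((M : ZMod 4)) = 0 := by
        rw [hMdef, ha, hb]
        push_cast
        generalize ((a : ZMod 4)) = x
        generalize ((b : ZMod 4)) = y
        revert x y
        decide
      exact_mod_cast (ZMod.intCast_zmod_eq_zero_iff_dvd M 4).mp hz
    have h4N : (4 : ℤ) ∣ N := by
      have : N = M - 16 * (m^4 * n^4) := by rw [hMdef, hNdef]; ring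
      rw [this]
      exact dvd_sub h4M ⟨4*(m^4*n^4), by ring⟩
    have h8M : ¬ (8 : ℤ) ∣ M := by
      intro hdvd
      have hz : ((M : ZMod 8)) = 0 :=
        (ZMod.intCast_zmod_eq_zero_iff_dvd M 8).mpr (by exact_mod_cast hdvd)
      revert hz
      rw [hMdef, ha, hb]
      push_cast
      generalize ((a : ZMod 8)) = x
      generalize ((b : ZMod 8)) = y
      revert x y
      decide
    have h4d : 4 ∣ d := by
      have : (4 : ℤ) ∣ (d : ℤ) := Int.dvd_coe_gcd h4M h4N
      exact_mod_cast this
    have h8d : ¬ 8 ∣ d := by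
      intro h
      exact h8M (dvd_trans (by exact_mod_cast h : (8:ℤ) ∣ (d:ℤ)) hdM)
    have hle : d ≤ 16 := Nat.le_of_dvd (by norm_num) hd16n
    interval_cases d <;> omega
  · intro h
    have h2M : ¬ (2 : ℤ) ∣ M := by
      intro hdvd
      have hz : ((M : ZMod 2)) = 0 :=
        (ZMod.intCast_zmod_eq_zero_iff_dvd M 2).mpr (by exact_mod_cast hdvd)
      revert hz
      rcases h with ⟨⟨a, ha⟩, ⟨b, hb⟩⟩ | ⟨⟨b, hb⟩, ⟨a, ha⟩⟩ <;>
      · rw [hMdef, ha, hb]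
        push_cast
        generalize ((a : ZMod 2)) = x
        generalize ((b : ZMod 2)) = y
        revert x y
        decide
    have h2d : ¬ 2 ∣ d := by
      intro h
      exact h2M (dvd_trans (by exact_mod_cast h : (2:ℤ) ∣ (d:ℤ)) hdM)
    have hle : d ≤ 16 := Nat.le_of_dvd (by norm_num) hd16n
    interval_cases d <;> omega
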